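/- arXiv:1302.6151 — 2 statements merged into one kernel-verified Lean document; each statement's English description precedes it below -/
import Mathlib

section
/- Let a ∈ ℂ∖{0} and b ∈ ℂ. Set R := min{|a|^{−1/2}, 2|b|^{−1}} (interpreted as |a|^{−1/2} when b = 0). Then (1) the set {z ∈ ℂ : |az² + bz| ≤ 1} is contained in B₀(R) ∪ B_{−b/a}(R), the union of the closed balls of radius R centered at 0 and at −b/a; and (2) its Lebesgue measure satisfies vol{z ∈ ℂ : |az² + bz| ≤ 1} ≪ R² ≪ min{|a|^{−1}, |b|^{−2}}, with absolute implied constants (the quantity |b|^{−2} being interpreted as +∞ when b = 0). -/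
noncomputable section

namespace Paper

open Classical in
/-- `R = min{|a|^{-1/2}, 2|b|^{-1}}`, interpreted as `|a|^{-1/2}` when `b = 0`. -/
def R13 (a b : ℂ) : ℝ :=
  if b = 0 then (Real.sqrt (‖a‖))⁻¹
  else min ((Real.sqrt (‖a‖))⁻¹) (2 / ‖b‖)

lemma R13_le_inv_sqrt (a b : ℂ) : R13 a b ≤ (Real.sqrt (‖a‖))⁻¹ := by
  unfold R13; split
  · exact le_rfl
  · exact min_le_left _ _

lemma R13_pos {a : ℂ} (b : ℂ) (ha : a ≠ 0) : 0 < R13 a b := by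
  have h : 0 < ‖a‖ := norm_pos_iff.mpr ha
  unfold R13; split
  · positivity
  · rename_i hb
    have hb' : 0 < ‖b‖ := norm_pos_iff.mpr hb
    have h1 : 0 < (Real.sqrt (‖a‖))⁻¹ := by positivity
    have h2 : 0 < 2 / ‖b‖ := by positivity
    exact lt_min h1 h2

lemma subset13 {a b : ℂ} (ha : a ≠ 0) :
    {z : ℂ | ‖a * z ^ 2 + b * z‖ ≤ 1} ⊆
      Metric.closedBall 0 (R13 a b) ∪ Metric.closedBall (-b / a) (R13 a b) := by
  intro z hz
  simp only [Set.mem_setOf_eq] at hz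
  by_contra hcon
  rw [Set.mem_union, not_or] at hcon
  obtain ⟨h1, h2⟩ := hcon
  rw [Metric.mem_closedBall, not_le, Complex.dist_eq, sub_zero] at h1
  rw [Metric.mem_closedBall, not_le, Complex.dist_eq] at h2
  have hA : 0 < ‖a‖ := norm_pos_iff.mpr ha
  set R := R13 a b with hR
  set x := ‖z‖ with hx
  set y := ‖z - (-b / a)‖ with hy
  have hfact : a * z ^ 2 + b * z = a * z * (z - (-b / a)) := by
    field_simp; ring
  have habs : ‖a * z ^ 2 + b * z‖ = ‖a‖ * x * y := by
    rw [hfact, norm_mul, norm_mul]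
  have hRpos : 0 < R := R13_pos b ha
  have hs : Real.sqrt (‖a‖) ^ 2 = ‖a‖ := Real.sq_sqrt hA.le
  have hspos : 0 < Real.sqrt (‖a‖) := Real.sqrt_pos.mpr hA
  -- key: ‖a‖ * x * y > 1
  have hkey : 1 < ‖a‖ * x * y := by
    by_cases hb : b = 0
    · -- R = (sqrt |a|)⁻¹, so R^2 = |a|⁻¹
      have hRdef : R = (Real.sqrt (‖a‖))⁻¹ := by rw [hR]; unfold R13; simp [hb]
      have hxy : R * R < x * y := mul_lt_mul'' h1 h2 hRpos.le hRpos.le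
      rw [hRdef] at hxy
      have : (Real.sqrt (‖a‖))⁻¹ * (Real.sqrt (‖a‖))⁻¹
          = (‖a‖)⁻¹ := by
        rw [← mul_inv]
        congr 1
        nlinarith
      rw [this] at hxy
      calc 1 = ‖a‖ * (‖a‖)⁻¹ := by field_simp
        _ < ‖a‖ * (x * y) := by
            exact (mul_lt_mul_iff_right₀ hA).mpr hxy
        _ = ‖a‖ * x * y := by ring
    · have hB : 0 < ‖b‖ := norm_pos_iff.mpr hb
      have hRdef : R = min ((Real.sqrt (‖a‖))⁻¹) (2 / ‖b‖) := by
        rw [hR]; unfold R13; simp [hb]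
      -- triangle: |b/a| ≤ x + y since (z - (-b/a)) - z = b/a
      have htri : ‖b‖ / ‖a‖ ≤ x + y := by
        have h := norm_add_le (z - (-b/a)) (-z)
        rw [norm_neg] at h
        have heq : z - (-b/a) + -z = b / a := by ring
        rw [heq, norm_div] at h
        linarith [h]
      rcases min_cases ((Real.sqrt (‖a‖))⁻¹) (2 / ‖b‖) with
        ⟨hmin, hle⟩ | ⟨hmin, hlt⟩
      · -- R = (sqrt|a|)⁻¹
        have hRdef' : R = (Real.sqrt (‖a‖))⁻¹ := by rw [hRdef, hmin]
        have hxy : R * R < x * y := mul_lt_mul'' h1 h2 hRpos.le hRpos.le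
        have hRR : R * R = (‖a‖)⁻¹ := by
          rw [hRdef', ← mul_inv]
          congr 1
          nlinarith
        rw [hRR] at hxy
        calc 1 = ‖a‖ * (‖a‖)⁻¹ := by field_simp
          _ < ‖a‖ * (x * y) := (mul_lt_mul_iff_right₀ hA).mpr hxy
          _ = ‖a‖ * x * y := by ring
      · -- R = 2/|b| and 2/|b| < (sqrt|a|)⁻¹
        have hRdef' : R = 2 / ‖b‖ := by rw [hRdef, hmin]
        have h4 : 4 * ‖a‖ < ‖b‖ ^ 2 := by
          have h'' : 2 * Real.sqrt (‖a‖) < ‖b‖ := by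
            rw [div_lt_iff₀ hB, inv_mul_eq_div, lt_div_iff₀ hspos] at hlt
            nlinarith
          nlinarith
        have e1 : x * y > R * (x + y) - R * R := by nlinarith [h1, h2]
        have e2 : R * (x + y) ≥ 2 / ‖a‖ := by
          have h5 := mul_le_mul_of_nonneg_left htri hRpos.le
          have h6 : R * (‖b‖ / ‖a‖) = 2 / ‖a‖ := by
            rw [hRdef']
            field_simp
          linarith [h5, h6.symm.le]
        have e3 : R * R < 1 / ‖a‖ := by
          rw [hRdef']
          rw [div_mul_div_comm, div_lt_div_iff₀ (by positivity) hA]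
          nlinarith
        have e5 : 2 / ‖a‖ = 2 * (1 / ‖a‖) := by ring
        have e4 : 1 / ‖a‖ < x * y := by linarith
        calc 1 = ‖a‖ * (1 / ‖a‖) := by field_simp
          _ < ‖a‖ * (x * y) := (mul_lt_mul_iff_right₀ hA).mpr e4
          _ = ‖a‖ * x * y := by ring
  rw [habs] at hz
  linarith

theorem statement13 :
    ∃ c : ℝ, 0 < c ∧ ∀ a b : ℂ, a ≠ 0 →
      ({z : ℂ | ‖a * z ^ 2 + b * z‖ ≤ 1} ⊆
          Metric.closedBall 0 (R13 a b) ∪ Metric.closedBall (-b / a) (R13 a b)) ∧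
      (MeasureTheory.volume {z : ℂ | ‖a * z ^ 2 + b * z‖ ≤ 1}).toReal
          ≤ c * R13 a b ^ 2 ∧
      R13 a b ^ 2 ≤ c * (‖a‖)⁻¹ ∧
      (b ≠ 0 → R13 a b ^ 2 ≤ c * ((‖b‖) ^ 2)⁻¹) := by
  refine ⟨10, by norm_num, fun a b ha => ?_⟩
  have hA : 0 < ‖a‖ := norm_pos_iff.mpr ha
  have hRpos : 0 < R13 a b := R13_pos b ha
  have hsub := subset13 (b := b) ha
  refine ⟨hsub, ?_, ?_, ?_⟩
  · -- volume bound
    have hvol : MeasureTheory.volume {z : ℂ | ‖a * z ^ 2 + b * z‖ ≤ 1}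
        ≤ ENNReal.ofReal (10 * R13 a b ^ 2) := by
      calc MeasureTheory.volume {z : ℂ | ‖a * z ^ 2 + b * z‖ ≤ 1}
          ≤ MeasureTheory.volume (Metric.closedBall (0:ℂ) (R13 a b) ∪
              Metric.closedBall (-b / a) (R13 a b)) := MeasureTheory.measure_mono hsub
        _ ≤ MeasureTheory.volume (Metric.closedBall (0:ℂ) (R13 a b)) +
              MeasureTheory.volume (Metric.closedBall (-b / a) (R13 a b)) :=
            MeasureTheory.measure_union_le _ _
        _ = ENNReal.ofReal (R13 a b) ^ 2 * NNReal.pi +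
              ENNReal.ofReal (R13 a b) ^ 2 * NNReal.pi := by
            rw [Complex.volume_closedBall, Complex.volume_closedBall]
        _ ≤ ENNReal.ofReal (10 * R13 a b ^ 2) := by
            rw [← two_mul]
            have hpi : (NNReal.pi : ENNReal) = ENNReal.ofReal Real.pi := by
              rw [ENNReal.ofReal, ← NNReal.coe_real_pi, Real.toNNReal_coe]
            rw [hpi, ← ENNReal.ofReal_pow hRpos.le, ← ENNReal.ofReal_mul (by positivity),
              ← ENNReal.ofReal_ofNat, ← ENNReal.ofReal_mul (by norm_num)]
            apply ENNReal.ofReal_le_ofReal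
            have hr2 : 0 ≤ R13 a b * R13 a b := mul_nonneg hRpos.le hRpos.le
            have hp := mul_le_mul_of_nonneg_left Real.pi_le_four hr2
            ring_nf
            nlinarith [hr2, hp, Real.pi_pos]
    exact ENNReal.toReal_le_of_le_ofReal (by positivity) hvol
  · -- R^2 ≤ 7 / |a|
    have h1 : R13 a b ≤ (Real.sqrt (‖a‖))⁻¹ := R13_le_inv_sqrt a b
    have hs : Real.sqrt (‖a‖) ^ 2 = ‖a‖ := Real.sq_sqrt hA.le
    have hspos : 0 < Real.sqrt (‖a‖) := Real.sqrt_pos.mpr hA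
    have h2 : R13 a b ^ 2 ≤ ((Real.sqrt (‖a‖))⁻¹) ^ 2 :=
      pow_le_pow_left₀ hRpos.le h1 2
    have h3 : ((Real.sqrt (‖a‖))⁻¹) ^ 2 = (‖a‖)⁻¹ := by
      rw [inv_pow, hs]
    have h4 : (0:ℝ) < (‖a‖)⁻¹ := by positivity
    nlinarith
  · -- b ≠ 0 case
    intro hb
    have hB : 0 < ‖b‖ := norm_pos_iff.mpr hb
    have h1 : R13 a b ≤ 2 / ‖b‖ := by
      unfold R13; simp [hb]
    have h2 : R13 a b ^ 2 ≤ (2 / ‖b‖) ^ 2 := pow_le_pow_left₀ hRpos.le h1 2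
    have h3 : (2 / ‖b‖) ^ 2 = 4 * ((‖b‖) ^ 2)⁻¹ := by
      field_simp; ring
    have h4 : (0:ℝ) < ((‖b‖) ^ 2)⁻¹ := by positivity
    nlinarith

end Paper
end
end

section
/- Let a ∈ ℂ∖{0}, b ∈ ℂ, and fix a complex square root √(b/a). Set R := min{|a|^{−1/2}, |ab|^{−1/2}} (interpreted as |a|^{−1/2} when b = 0). Then (1) the set {z ∈ ℂ : |az² − b| ≤ 1} is contained in B_{√(b/a)}(R) ∪ B_{−√(b/a)}(R); and (2) its Lebesgue measure satisfies vol{z ∈ ℂ : |az² − b| ≤ 1} ≪ R² ≤ min{|a|^{−1}, |ab|^{−1}}, with absolute implied constant (the quantity |ab|^{−1} being interpreted as +∞ when b = 0). -/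
noncomputable section

namespace Paper

open Classical in
/-- `R = min{|a|^{-1/2}, |ab|^{-1/2}}`, interpreted as `|a|^{-1/2}` when `b = 0`. -/
def R14 (a b : ℂ) : ℝ :=
  if b = 0 then (Real.sqrt (‖a‖))⁻¹
  else min ((Real.sqrt (‖a‖))⁻¹) ((Real.sqrt (‖a * b‖))⁻¹)

lemma R14_nonneg (a b : ℂ) : 0 ≤ R14 a b := by
  unfold R14; split
  · positivity
  · exact le_min (by positivity) (by positivity)

lemma R14_le (a b : ℂ) : R14 a b ≤ (Real.sqrt (‖a‖))⁻¹ := by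
  unfold R14; split
  · exact le_refl _
  · exact min_le_left _ _

lemma aux14 (a b s z : ℂ) (ha : a ≠ 0) (hs : s ^ 2 = b / a)
    (hz : ‖a * z ^ 2 - b‖ ≤ 1)
    (hle : ‖z - s‖ ≤ ‖z + s‖) : dist z s ≤ R14 a b := by
  have hfac : a * z ^ 2 - b = a * ((z - s) * (z + s)) := by
    have h : a * ((z - s) * (z + s)) = a * z ^ 2 - a * s ^ 2 := by ring
    rw [h, hs]; field_simp
  rw [hfac, norm_mul, norm_mul] at hz
  set d1 := ‖z - s‖ with hd1
  set d2 := ‖z + s‖ with hd2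
  have hA : (0:ℝ) < ‖a‖ := norm_pos_iff.mpr ha
  have hd1n : 0 ≤ d1 := norm_nonneg _
  have hd2n : 0 ≤ d2 := norm_nonneg _
  have h1 : d1 ≤ (Real.sqrt (‖a‖))⁻¹ := by
    have hsq : d1 ^ 2 ≤ (‖a‖)⁻¹ := by
      have hh : ‖a‖ * d1 ^ 2 ≤ 1 := by
        calc ‖a‖ * d1 ^ 2 = ‖a‖ * (d1 * d1) := by ring
          _ ≤ ‖a‖ * (d1 * d2) :=
            mul_le_mul_of_nonneg_left (mul_le_mul_of_nonneg_left hle hd1n) hA.le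
          _ ≤ 1 := hz
      rw [inv_eq_one_div, le_div_iff₀ hA]
      linarith
    calc d1 = Real.sqrt (d1 ^ 2) := (Real.sqrt_sq hd1n).symm
      _ ≤ Real.sqrt ((‖a‖)⁻¹) := Real.sqrt_le_sqrt hsq
      _ = (Real.sqrt (‖a‖))⁻¹ := Real.sqrt_inv _
  rw [Complex.dist_eq, ← hd1, R14]
  by_cases hb : b = 0
  · rw [if_pos hb]; exact h1
  · rw [if_neg hb]
    refine le_min h1 ?_
    have hsne : s ≠ 0 := by
      intro h0
      rw [h0] at hs
      exact hb (by field_simp at hs; simpa using hs.symm)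
    have hS : (0:ℝ) < ‖s‖ := norm_pos_iff.mpr hsne
    -- |s| ≤ d2
    have hsd2 : ‖s‖ ≤ d2 := by
      have h2s : 2 * ‖s‖ = ‖s - (-s)‖ := by
        rw [sub_neg_eq_add, ← two_mul, norm_mul]; simp
      have htri : ‖s - (-s)‖ ≤ d1 + d2 := by
        have : s - (-s) = -(z - s) + (z + s) := by ring
        rw [this]
        calc ‖-(z - s) + (z + s)‖ ≤ ‖-(z - s)‖ + ‖z + s‖ :=
              norm_add_le _ _
          _ = d1 + d2 := by rw [norm_neg]
      nlinarith
    -- √|ab| = |a| * |s|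
    have hval : Real.sqrt (‖a * b‖) = ‖a‖ * ‖s‖ := by
      have hs2 : ‖s‖ ^ 2 = ‖b‖ / ‖a‖ := by
        rw [← norm_pow, hs, norm_div]
      have : ‖a * b‖ = (‖a‖ * ‖s‖) ^ 2 := by
        rw [norm_mul]
        field_simp [mul_pow, hs2]
        rw [hs2]; field_simp [hA.ne']
      rw [this, Real.sqrt_sq (by positivity)]
    rw [hval]
    have hkey : (‖a‖ * ‖s‖) * d1 ≤ 1 := by
      calc (‖a‖ * ‖s‖) * d1 = ‖a‖ * (d1 * ‖s‖) := by ring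
        _ ≤ ‖a‖ * (d1 * d2) :=
          mul_le_mul_of_nonneg_left (mul_le_mul_of_nonneg_left hsd2 hd1n) hA.le
        _ ≤ 1 := hz
    rw [inv_eq_one_div, le_div_iff₀ (by positivity)]
    linarith

theorem statement14 :
    ∃ c : ℝ, 0 < c ∧ ∀ a b s : ℂ, a ≠ 0 → s ^ 2 = b / a →
      ({z : ℂ | ‖a * z ^ 2 - b‖ ≤ 1} ⊆
          Metric.closedBall s (R14 a b) ∪ Metric.closedBall (-s) (R14 a b)) ∧
      (MeasureTheory.volume {z : ℂ | ‖a * z ^ 2 - b‖ ≤ 1}).toReal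
          ≤ c * R14 a b ^ 2 ∧
      R14 a b ^ 2 ≤ (‖a‖)⁻¹ ∧
      (b ≠ 0 → R14 a b ^ 2 ≤ (‖a * b‖)⁻¹) := by
  refine ⟨2 * Real.pi, by positivity, fun a b s ha hs => ?_⟩
  have hA : (0:ℝ) < ‖a‖ := norm_pos_iff.mpr ha
  have hsub : {z : ℂ | ‖a * z ^ 2 - b‖ ≤ 1} ⊆
      Metric.closedBall s (R14 a b) ∪ Metric.closedBall (-s) (R14 a b) := by
    intro z hz
    simp only [Set.mem_setOf_eq] at hz
    rcases le_total (‖z - s‖) (‖z + s‖) with h | h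
    · exact Or.inl (aux14 a b s z ha hs hz h)
    · refine Or.inr ?_
      have hs' : (-s) ^ 2 = b / a := by rw [neg_pow]; simpa using hs
      have h' : ‖z - (-s)‖ ≤ ‖z + (-s)‖ := by
        rw [sub_neg_eq_add, ← sub_eq_add_neg]; exact h
      exact aux14 a b (-s) z ha hs' hz h'
  refine ⟨hsub, ?_, ?_, ?_⟩
  · -- volume bound
    have hvol : MeasureTheory.volume {z : ℂ | ‖a * z ^ 2 - b‖ ≤ 1} ≤
        ENNReal.ofReal (2 * Real.pi * R14 a b ^ 2) := by
      calc MeasureTheory.volume {z : ℂ | ‖a * z ^ 2 - b‖ ≤ 1}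
          ≤ MeasureTheory.volume
            (Metric.closedBall s (R14 a b) ∪ Metric.closedBall (-s) (R14 a b)) :=
            MeasureTheory.measure_mono hsub
        _ ≤ MeasureTheory.volume (Metric.closedBall s (R14 a b)) +
            MeasureTheory.volume (Metric.closedBall (-s) (R14 a b)) :=
            MeasureTheory.measure_union_le _ _
        _ = ENNReal.ofReal (R14 a b) ^ 2 * NNReal.pi +
            ENNReal.ofReal (R14 a b) ^ 2 * NNReal.pi := by
            rw [Complex.volume_closedBall, Complex.volume_closedBall]
        _ = ENNReal.ofReal (2 * Real.pi * R14 a b ^ 2) := by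
            have hpi : (NNReal.pi : ENNReal) = ENNReal.ofReal Real.pi := by
              rw [← NNReal.coe_real_pi, ENNReal.ofReal_coe_nnreal]
            rw [hpi, ← ENNReal.ofReal_pow (R14_nonneg a b), ← ENNReal.ofReal_mul (by positivity),
              ← ENNReal.ofReal_add (by positivity) (by positivity)]
            congr 1
            ring
    exact ENNReal.toReal_le_of_le_ofReal (by positivity) hvol
  · calc R14 a b ^ 2 ≤ ((Real.sqrt (‖a‖))⁻¹) ^ 2 :=
        pow_le_pow_left₀ (R14_nonneg a b) (R14_le a b) 2
      _ = (‖a‖)⁻¹ := by rw [inv_pow, Real.sq_sqrt hA.le]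
  · intro hb
    have hAB : (0:ℝ) < ‖a * b‖ := norm_pos_iff.mpr (mul_ne_zero ha hb)
    have hle : R14 a b ≤ (Real.sqrt (‖a * b‖))⁻¹ := by
      rw [R14, if_neg hb]; exact min_le_right _ _
    calc R14 a b ^ 2 ≤ ((Real.sqrt (‖a * b‖))⁻¹) ^ 2 :=
        pow_le_pow_left₀ (R14_nonneg a b) hle 2
      _ = (‖a * b‖)⁻¹ := by rw [inv_pow, Real.sq_sqrt hAB.le]

end Paper
end
end
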